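/- Let C be a code in H(m,q) with minimum distance δ ≥ 3, let α ∈ C, and let y be an automorphism of H(m,q) with y(Γ1(C)) = Γ1(C) and y(α) ∉ C. Then the set Pre(α,y) has exactly m(q-1)/2 elements; in particular m(q-1) is even. -/

import Mathlib

open Set

variable {m : ℕ} {Q : Type*}

/-- An automorphism of the Hamming graph `H(m,q)`: a bijection of the vertex
set `Q^m` (given as an `Equiv`) preserving Hamming distance. -/
def IsHammingAut [DecidableEq Q] (f : (Fin m → Q) ≃ (Fin m → Q)) : Prop :=
  ∀ a b : Fin m → Q, hammingDist (f a) (f b) = hammingDist a b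

/-- The set of neighbours `Γ₁(C)` of a code `C` in `H(m,q)`. -/
def Nbrs [DecidableEq Q] (C : Set (Fin m → Q)) : Set (Fin m → Q) :=
  {ν | ν ∉ C ∧ ∃ α ∈ C, hammingDist ν α = 1}

/-- The code `C` has minimum distance `δ`. -/
def IsMinDist [DecidableEq Q] (C : Set (Fin m → Q)) (δ : ℕ) : Prop :=
  (∀ a ∈ C, ∀ b ∈ C, a ≠ b → δ ≤ hammingDist a b) ∧
  ∃ a ∈ C, ∃ b ∈ C, a ≠ b ∧ hammingDist a b = δ

/-- The neighbours `Γ₁(β)` of a single vertex `β`. -/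
def Sph [DecidableEq Q] (β : Fin m → Q) : Set (Fin m → Q) :=
  {ν | hammingDist β ν = 1}

/-- The set `Pre(α, y)` of pre-codewords of `α` with respect to `y`. -/
def Pre [DecidableEq Q] (C : Set (Fin m → Q)) (α : Fin m → Q)
    (y : (Fin m → Q) ≃ (Fin m → Q)) : Set (Fin m → Q) :=
  {π | hammingDist α π = 2 ∧ y π ∈ C}

/-- The set `C(π)` of codewords `β` with `d(β,π) = 2` admitting a common
neighbour `ν` with `π`. -/
def CSet [DecidableEq Q] (C : Set (Fin m → Q)) (π : Fin m → Q) : Set (Fin m → Q) :=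
  {β | β ∈ C ∧ hammingDist β π = 2 ∧ ∃ ν, hammingDist β ν = 1 ∧ hammingDist ν π = 1}

section Lemmas
open Finset
variable {m : ℕ} {Q : Type*} [DecidableEq Q]

lemma hd_def (x y : Fin m → Q) : hammingDist x y = (Finset.univ.filter fun i => x i ≠ y i).card := rfl

lemma dist_one_iff (w ν : Fin m → Q) :
    hammingDist w ν = 1 ↔ ∃ i, ν i ≠ w i ∧ ∀ j, j ≠ i → ν j = w j := by
  rw [hd_def, Finset.card_eq_one]
  constructor
  · rintro ⟨i, hi⟩
    refine ⟨i, ?_, fun j hj => ?_⟩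
    · have : i ∈ ({i} : Finset (Fin m)) := Finset.mem_singleton_self i
      rw [← hi, Finset.mem_filter] at this
      exact fun h => this.2 h.symm
    · by_contra h
      have : j ∈ Finset.univ.filter fun k => w k ≠ ν k :=
        Finset.mem_filter.mpr ⟨Finset.mem_univ _, fun h' => h h'.symm⟩
      rw [hi, Finset.mem_singleton] at this
      exact hj this
  · rintro ⟨i, hi, hall⟩
    refine ⟨i, ?_⟩
    ext j
    simp only [Finset.mem_filter, Finset.mem_univ, true_and, Finset.mem_singleton]
    constructor
    · intro h
      by_contra hj
      exact h (hall j hj).symm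
    · rintro rfl
      exact fun h => hi h.symm


lemma dist_two_iff (w β : Fin m → Q) (h : hammingDist w β = 2) :
    ∃ i j, i ≠ j ∧ β i ≠ w i ∧ β j ≠ w j ∧ ∀ k, k ≠ i → k ≠ j → β k = w k := by
  rw [hd_def, Finset.card_eq_two] at h
  obtain ⟨i, j, hij, hset⟩ := h
  have mem : ∀ k, (w k ≠ β k) ↔ (k = i ∨ k = j) := by
    intro k
    constructor
    · intro hk
      have : k ∈ Finset.univ.filter fun t => w t ≠ β t := Finset.mem_filter.mpr ⟨Finset.mem_univ _, hk⟩
      rw [hset] at this; simpa using this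
    · intro hk
      have : k ∈ ({i, j} : Finset (Fin m)) := by simpa using hk
      rw [← hset, Finset.mem_filter] at this; exact this.2
  exact ⟨i, j, hij, fun h => ((mem i).mpr (Or.inl rfl)) h.symm,
    fun h => ((mem j).mpr (Or.inr rfl)) h.symm,
    fun k hk1 hk2 => by
      by_contra h
      rcases (mem k).mp (fun h' => h h'.symm) with h' | h' <;> [exact hk1 h'; exact hk2 h']⟩

lemma dist_one_update (w : Fin m → Q) (i : Fin m) (a : Q) (ha : a ≠ w i) :
    hammingDist w (Function.update w i a) = 1 := by
  rw [dist_one_iff]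
  exact ⟨i, by simpa using ha, fun j hj => Function.update_of_ne hj _ _⟩

lemma dist_one_eq_update (w ν : Fin m → Q) (h : hammingDist w ν = 1) :
    ∃ i, ν i ≠ w i ∧ ν = Function.update w i (ν i) := by
  obtain ⟨i, hi, hall⟩ := (dist_one_iff w ν).mp h
  refine ⟨i, hi, funext fun j => ?_⟩
  rcases eq_or_ne j i with rfl | hj
  · simp
  · rw [Function.update_of_ne hj]; exact hall j hj

lemma sph_card [Fintype Q] (w : Fin m → Q) :
    (Finset.univ.filter fun ν => hammingDist w ν = 1).card = m * (Fintype.card Q - 1) := by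
  classical
  have : (Finset.univ.filter fun ν => hammingDist w ν = 1) =
      Finset.univ.biUnion (fun i : Fin m =>
        (Finset.univ.filter fun a : Q => a ≠ w i).image (Function.update w i)) := by
    ext ν
    simp only [Finset.mem_filter, Finset.mem_univ, true_and, Finset.mem_biUnion, Finset.mem_image]
    constructor
    · intro h
      obtain ⟨i, hi, heq⟩ := dist_one_eq_update w ν h
      exact ⟨i, ν i, hi, heq.symm⟩
    · rintro ⟨i, a, ha, rfl⟩
      exact dist_one_update w i a (by simpa using ha)
  rw [this, Finset.card_biUnion]
  · have : ∀ i : Fin m, ((Finset.univ.filter fun a : Q => a ≠ w i).image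
        (Function.update w i)).card = Fintype.card Q - 1 := by
      intro i
      rw [Finset.card_image_of_injOn]
      · rw [Finset.filter_ne', Finset.card_erase_of_mem (Finset.mem_univ _), Finset.card_univ]
      · intro a _ b _ hab
        have := congrFun hab i
        simpa using this
    simp [this, Finset.card_univ, mul_comm]
  · intro i _ j _ hij
    simp only [Finset.disjoint_left, Finset.mem_image, Finset.mem_filter]
    rintro ν ⟨a, ha, rfl⟩ ⟨b, hb, heq⟩
    have h1 := congrFun heq i
    rw [Function.update_self, Function.update_of_ne hij] at h1
    exact ha.2 h1.symm

lemma dist_beta_update (w β : Fin m → Q) (i j : Fin m) (hij : i ≠ j)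
    (hi : β i ≠ w i) (hj : β j ≠ w j) (hout : ∀ k, k ≠ i → k ≠ j → β k = w k) :
    hammingDist β (Function.update w i (β i)) = 1 := by
  rw [dist_one_iff]
  refine ⟨j, ?_, fun t ht => ?_⟩
  · rw [Function.update_of_ne (Ne.symm hij)]
    exact fun h => hj h.symm
  · rcases eq_or_ne t i with rfl | hti
    · simp
    · rw [Function.update_of_ne hti]
      exact (hout t hti ht).symm

lemma common_card [Fintype Q] (w β : Fin m → Q) (h : hammingDist w β = 2) :
    (Finset.univ.filter fun ν => hammingDist w ν = 1 ∧ hammingDist β ν = 1).card = 2 := by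
  obtain ⟨i, j, hij, hi, hj, hout⟩ := dist_two_iff w β h
  have hset : (Finset.univ.filter fun ν => hammingDist w ν = 1 ∧ hammingDist β ν = 1) =
      {Function.update w i (β i), Function.update w j (β j)} := by
    ext ν
    simp only [Finset.mem_filter, Finset.mem_univ, true_and, Finset.mem_insert,
      Finset.mem_singleton]
    constructor
    · rintro ⟨h1, h2⟩
      obtain ⟨k, hk, hkall⟩ := (dist_one_iff w ν).mp h1
      obtain ⟨l, hl, hlall⟩ := (dist_one_iff β ν).mp h2
      have key : ∀ i' j' : Fin m, i' ≠ j' → β i' ≠ w i' → β j' ≠ w j' → k = i' →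
          ν = Function.update w i' (β i') := by
        intro i' j' hij' hi' hj' hki
        have hkall' : ∀ t, t ≠ i' → ν t = w t := fun t ht => hkall t (by rw [hki]; exact ht)
        have hlj : l = j' := by
          by_contra hlj
          exact hj' ((hlall j' (fun h' => hlj h'.symm)).symm.trans (hkall' j' (Ne.symm hij')))
        have hlall' : ∀ t, t ≠ j' → ν t = β t := fun t ht => hlall t (by rw [hlj]; exact ht)
        funext t
        rcases eq_or_ne t i' with rfl | hti
        · rw [Function.update_self]
          exact hlall' t hij'
        · rw [Function.update_of_ne hti]
          exact hkall' t hti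
      have hkij : k = i ∨ k = j := by
        by_contra hc
        push_neg at hc
        have hli : l = i := by
          by_contra hli
          exact hi ((hlall i (fun h' => hli h'.symm)).symm.trans (hkall i (fun h' => hc.1 h'.symm)))
        have hlj : l = j := by
          by_contra hlj
          exact hj ((hlall j (fun h' => hlj h'.symm)).symm.trans (hkall j (fun h' => hc.2 h'.symm)))
        exact hij (hli ▸ hlj)
      rcases hkij with hki | hkj
      · exact Or.inl (key i j hij hi hj hki)
      · exact Or.inr (key j i (Ne.symm hij) hj hi hkj)
    · rintro (rfl | rfl)
      · exact ⟨dist_one_update w i (β i) hi, dist_beta_update w β i j hij hi hj hout⟩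
      · exact ⟨dist_one_update w j (β j) hj,
          dist_beta_update w β j i (Ne.symm hij) hj hi (fun k h1 h2 => hout k h2 h1)⟩
  rw [hset]
  rw [Finset.card_insert_of_notMem, Finset.card_singleton]
  simp only [Finset.mem_singleton]
  intro hc
  have := congrFun hc i
  rw [Function.update_self, Function.update_of_ne hij] at this
  exact hi this

end Lemmas

/-- `Pre(α,y)` has exactly `m(q-1)/2` elements; in particular
`m(q-1)` is even. -/


theorem stmt_6 [DecidableEq Q] [Fintype Q] (q : ℕ) (hq : Fintype.card Q = q)
    (C : Set (Fin m → Q)) (δ : ℕ)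
    (hmin : IsMinDist C δ) (hδ : 3 ≤ δ)
    (α : Fin m → Q) (hα : α ∈ C)
    (y : (Fin m → Q) ≃ (Fin m → Q)) (hy : IsHammingAut y)
    (hyN : y '' Nbrs C = Nbrs C) (hyα : y α ∉ C) :
    (Pre C α y).ncard = m * (q - 1) / 2 ∧ Even (m * (q - 1)) := by
  classical
  set w : Fin m → Q := y α with hw
  -- w is not a neighbour of C
  have hwN : w ∉ Nbrs C := by
    intro hmem
    rw [← hyN] at hmem
    obtain ⟨ν, hν, hνw⟩ := hmem
    have : ν = α := y.injective hνw
    subst this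
    exact hν.1 hα
  -- every vertex at distance 1 from w is in Nbrs C
  have hsph : ∀ ν : Fin m → Q, hammingDist w ν = 1 → ν ∈ Nbrs C := by
    intro ν hν
    set μ := y.symm ν with hμ
    have hyμ : y μ = ν := y.apply_symm_apply ν
    have hdαμ : hammingDist α μ = 1 := by
      have := hy α μ
      rw [hyμ, ← hw] at this
      rw [← this]; exact hν
    have hμC : μ ∉ C := by
      intro hμC
      have hne : μ ≠ α := by
        intro h; subst h
        simp [hammingDist_self] at hdαμ
      have := hmin.1 α hα μ hμC (Ne.symm hne)
      rw [hdαμ] at this; omega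
    have : μ ∈ Nbrs C := ⟨hμC, α, hα, by rwa [hammingDist_comm]⟩
    rw [← hyN]
    exact ⟨μ, this, hyμ⟩
  -- existence & uniqueness of the codeword near each sphere point
  have hexist : ∀ ν : Fin m → Q, hammingDist w ν = 1 →
      ∃ β, (β ∈ C ∧ hammingDist w β = 2) ∧ hammingDist β ν = 1 := by
    intro ν hν
    obtain ⟨hνC, β, hβC, hβν⟩ := hsph ν hν
    have h2 : hammingDist w β ≤ 2 := by
      have := hammingDist_triangle w ν β
      rw [hν, hβν] at this; omega
    have h0 : hammingDist w β ≠ 0 := by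
      intro h
      exact hyα (by rwa [eq_of_hammingDist_eq_zero h] )
    have h1 : hammingDist w β ≠ 1 := by
      intro h
      exact hwN ⟨hyα, β, hβC, h⟩
    exact ⟨β, ⟨hβC, by omega⟩, by rwa [hammingDist_comm]⟩
  have huniq : ∀ ν β β' : Fin m → Q, β ∈ C → β' ∈ C →
      hammingDist β ν = 1 → hammingDist β' ν = 1 → β = β' := by
    intro ν β β' hβ hβ' h1 h2
    by_contra hne
    have hd := hmin.1 β hβ β' hβ' hne
    have := hammingDist_triangle β ν β'
    rw [h1, hammingDist_comm ν β', h2] at this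
    omega
  -- Finset bookkeeping
  set S : Finset (Fin m → Q) := Finset.univ.filter fun ν => hammingDist w ν = 1 with hS
  set B : Finset (Fin m → Q) :=
    Finset.univ.filter fun β => β ∈ C ∧ hammingDist w β = 2 with hB
  have hcover : S = B.biUnion fun β =>
      Finset.univ.filter fun ν => hammingDist w ν = 1 ∧ hammingDist β ν = 1 := by
    ext ν
    simp only [hS, hB, Finset.mem_filter, Finset.mem_univ, true_and, Finset.mem_biUnion]
    constructor
    · intro hν
      obtain ⟨β, hβ, hβν⟩ := hexist ν hν
      exact ⟨β, hβ, hν, hβν⟩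
    · rintro ⟨β, -, hν, -⟩
      exact hν
  have hScard : S.card = m * (q - 1) := by
    rw [hS, sph_card, hq]
  have hcard2 : S.card = 2 * B.card := by
    rw [hcover, Finset.card_biUnion]
    · rw [Finset.sum_congr rfl (fun β hβ => ?_), Finset.sum_const, smul_eq_mul, mul_comm]
      rw [hB, Finset.mem_filter] at hβ
      exact common_card w β hβ.2.2
    · intro β hβ β' hβ' hne
      rw [Finset.mem_coe, Finset.mem_filter] at hβ hβ'
      simp only [Finset.disjoint_left, Finset.mem_filter, Finset.mem_univ, true_and]
      rintro ν ⟨-, h1⟩ ⟨-, h2⟩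
      exact hne (huniq ν β β' hβ.2.1 hβ'.2.1 h1 h2)
  -- Pre = y.symm '' B
  have hPre : Pre C α y = y.symm '' (↑B : Set (Fin m → Q)) := by
    ext π
    simp only [Pre, Set.mem_setOf_eq, Set.mem_image, Finset.coe_filter, Finset.mem_univ,
      true_and, Set.mem_setOf_eq, hB]
    constructor
    · rintro ⟨hd, hC⟩
      refine ⟨y π, ⟨hC, ?_⟩, y.symm_apply_apply π⟩
      rw [hw, hy α π]; exact hd
    · rintro ⟨β, ⟨hC, hd⟩, rfl⟩
      refine ⟨?_, by rwa [y.apply_symm_apply]⟩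
      have := hy α (y.symm β)
      rw [y.apply_symm_apply, ← hw] at this
      rw [← this]; exact hd
  have hPcard : (Pre C α y).ncard = B.card := by
    rw [hPre, Set.ncard_image_of_injective _ y.symm.injective, Set.ncard_coe_finset]
  rw [hScard] at hcard2
  constructor
  · rw [hPcard]; omega
  · exact ⟨B.card, by omega⟩
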